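/- For a density matrix ρ, Hermitian X, Y, and α ∈ [0,1], the quantities W_{ρ,α}(X) = √(K_{ρ,α}(X) L_{ρ,α}(X)) satisfy the uncertainty relation W_{ρ,α}(X) W_{ρ,α}(Y) ≥ (1/4)|Tr[((ρ^α+ρ^{1−α})/2)² [X,Y]]|². -/

import Mathlib

open Matrix ComplexOrder

/-- The real power of a positive semidefinite matrix, defined via the
continuous functional calculus (spectral decomposition). -/
noncomputable def mpow {n : Type*} [Fintype n] [DecidableEq n]
    (ρ : Matrix n n ℂ) (hρ : ρ.PosSemidef) (α : ℝ) : Matrix n n ℂ :=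
  hρ.1.cfc (fun x : ℝ => x ^ α)

section aux

variable {n : Type*} [Fintype n] [DecidableEq n]

lemma mpow_isHermitian (ρ : Matrix n n ℂ) (hρ : ρ.PosSemidef) (α : ℝ) :
    (mpow ρ hρ α).IsHermitian := by
  unfold mpow
  rw [← hρ.1.cfc_eq]
  exact (cfc_predicate (R := ℝ) (fun x : ℝ => x ^ α) ρ : IsSelfAdjoint _)

/-- Frobenius Cauchy–Schwarz for Hermitian matrices. -/
lemma herm_cs (P Q : Matrix n n ℂ) (hP : P.IsHermitian) (hQ : Q.IsHermitian) :
    ‖(P * Q).trace‖ ^ 2 ≤ ((P * P).trace).re * ((Q * Q).trace).re := by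
  classical
  set v : Matrix n n ℂ → EuclideanSpace ℂ (n × n) :=
    fun M => (WithLp.equiv 2 ((n × n) → ℂ)).symm (fun p => M p.1 p.2) with hv
  have hinner : ∀ (M N : Matrix n n ℂ), M.IsHermitian →
      (inner ℂ (v M) (v N) : ℂ) = (M * N).trace := by
    intro M N hM
    simp only [hv, PiLp.inner_apply, RCLike.inner_apply, WithLp.equiv_symm_apply, PiLp.toLp_apply,
      Matrix.trace, Matrix.diag, Matrix.mul_apply, Fintype.sum_prod_type, RCLike.star_def]
    rw [Finset.sum_comm]
    refine Finset.sum_congr rfl fun j _ => Finset.sum_congr rfl fun i _ => ?_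
    have : (starRingEnd ℂ) (M i j) = M j i := by
      conv_rhs => rw [← hM.eq]
      simp [Matrix.conjTranspose_apply]
    rw [this, mul_comm]
  have hnorm : ∀ (M : Matrix n n ℂ), M.IsHermitian → ((M * M).trace).re = ‖v M‖ ^ 2 := by
    intro M hM
    rw [← hinner M M hM, ← inner_self_eq_norm_sq (𝕜 := ℂ)]
    rfl
  have hcs := norm_inner_le_norm (𝕜 := ℂ) (v P) (v Q)
  have h2 : ‖(P * Q).trace‖ ≤ ‖v P‖ * ‖v Q‖ := by
    rw [← hinner P Q hP] at *
    exact hcs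
  have hnn : (0:ℝ) ≤ ‖(P*Q).trace‖ := norm_nonneg _
  calc ‖(P * Q).trace‖ ^ 2 ≤ (‖v P‖ * ‖v Q‖) ^ 2 := by
        exact pow_le_pow_left₀ hnn h2 2
    _ = ‖v P‖ ^ 2 * ‖v Q‖ ^ 2 := by ring
    _ = ((P * P).trace).re * ((Q * Q).trace).re := by rw [hnorm P hP, hnorm Q hQ]

lemma herm_trace_sq_nonneg (P : Matrix n n ℂ) (hP : P.IsHermitian) :
    0 ≤ ((P * P).trace).re := by
  have : P * P = Pᴴ * P := by rw [hP.eq]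
  rw [this]
  simp only [Matrix.trace, Matrix.diag, Matrix.mul_apply, Matrix.conjTranspose_apply,
    Complex.re_sum]
  refine Finset.sum_nonneg fun j _ => Finset.sum_nonneg fun i _ => ?_
  have : (star (P i j) * P i j).re = Complex.normSq (P i j) := by
    simp [Complex.normSq_apply, Complex.mul_re, Complex.star_def]
    try ring
  rw [this]
  exact Complex.normSq_nonneg _

/-- The key trace identity Tr[(AX−XA)(AY+YA)] = Tr[A²(XY−YX)]. -/
lemma trace_key (A X₀ Y₀ : Matrix n n ℂ) :
    ((A * X₀ - X₀ * A) * (A * Y₀ + Y₀ * A)).trace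
      = (A ^ 2 * (X₀ * Y₀ - Y₀ * X₀)).trace := by
  have e : (A * X₀ - X₀ * A) * (A * Y₀ + Y₀ * A)
      = A ^ 2 * (X₀ * Y₀ - Y₀ * X₀)
        + (A * (X₀ * A * Y₀) - (X₀ * A * Y₀) * A)
        + ((A * X₀ * Y₀) * A - A * (A * X₀ * Y₀))
        + ((A * A * Y₀) * X₀ - X₀ * (A * A * Y₀)) := by
    noncomm_ring
  rw [e]
  simp only [Matrix.trace_add, Matrix.trace_sub]
  rw [Matrix.trace_mul_comm A (X₀ * A * Y₀), Matrix.trace_mul_comm (A * X₀ * Y₀) A,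
    Matrix.trace_mul_comm (A * A * Y₀) X₀]
  ring

end aux

theorem stmt6 {n : Type*} [Fintype n] [DecidableEq n]
    (ρ : Matrix n n ℂ) (hρ : ρ.PosSemidef) (htr : ρ.trace = 1)
    (X Y : Matrix n n ℂ) (hX : X.IsHermitian) (hY : Y.IsHermitian)
    (α : ℝ) (hα : α ∈ Set.Icc (0:ℝ) 1) :
    let A := (1/2 : ℂ) • (mpow ρ hρ α + mpow ρ hρ (1-α))
    let K : Matrix n n ℂ → ℝ := fun Z =>
      (((1/2 : ℂ) * ((Complex.I • (A * (Z - (ρ * Z).trace • 1) -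
          (Z - (ρ * Z).trace • 1) * A)) ^ 2).trace)).re
    let L : Matrix n n ℂ → ℝ := fun Z =>
      (((1/2 : ℂ) * ((A * (Z - (ρ * Z).trace • 1) +
          (Z - (ρ * Z).trace • 1) * A) ^ 2).trace)).re
    let W : Matrix n n ℂ → ℝ := fun Z => Real.sqrt (K Z * L Z)
    W X * W Y ≥ (1/4) * ‖(A ^ 2 * (X * Y - Y * X)).trace‖ ^ 2 := by
  intro A K L W
  -- Hermiticity of A
  have hA : A.IsHermitian := by
    have h1 := mpow_isHermitian ρ hρ α
    have h2 := mpow_isHermitian ρ hρ (1-α)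
    have := h1.add h2
    unfold A
    unfold Matrix.IsHermitian at *
    rw [Matrix.conjTranspose_smul, this]
    norm_num
  -- centered versions are Hermitian
  have hcenter : ∀ Z : Matrix n n ℂ, Z.IsHermitian →
      (Z - (ρ * Z).trace • 1).IsHermitian := by
    intro Z hZ
    have hc : star ((ρ * Z).trace) = (ρ * Z).trace := by
      rw [← Matrix.trace_conjTranspose, Matrix.conjTranspose_mul, hρ.1.eq, hZ.eq,
        Matrix.trace_mul_comm]
    unfold Matrix.IsHermitian
    rw [Matrix.conjTranspose_sub, hZ.eq, Matrix.conjTranspose_smul, hc,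
      Matrix.conjTranspose_one]
  have hX0 := hcenter X hX
  have hY0 := hcenter Y hY
  set X₀ := X - (ρ * X).trace • 1 with hX₀def
  set Y₀ := Y - (ρ * Y).trace • 1 with hY₀def
  -- the P and Q matrices
  have hPherm : ∀ Z₀ : Matrix n n ℂ, Z₀.IsHermitian →
      (Complex.I • (A * Z₀ - Z₀ * A)).IsHermitian := by
    intro Z₀ hZ₀
    unfold Matrix.IsHermitian
    rw [Matrix.conjTranspose_smul, Matrix.conjTranspose_sub, Matrix.conjTranspose_mul,
      Matrix.conjTranspose_mul, hA.eq, hZ₀.eq]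
    rw [Complex.star_def, Complex.conj_I, neg_smul, smul_sub, smul_sub]
    abel
  have hQherm : ∀ Z₀ : Matrix n n ℂ, Z₀.IsHermitian →
      (A * Z₀ + Z₀ * A).IsHermitian := by
    intro Z₀ hZ₀
    unfold Matrix.IsHermitian
    rw [Matrix.conjTranspose_add, Matrix.conjTranspose_mul, Matrix.conjTranspose_mul,
      hA.eq, hZ₀.eq, add_comm]
  -- commutator is unchanged by centering
  have hcomm : X₀ * Y₀ - Y₀ * X₀ = X * Y - Y * X := by
    rw [hX₀def, hY₀def]
    simp only [sub_mul, mul_sub, Matrix.smul_mul, Matrix.mul_smul, Matrix.one_mul,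
      Matrix.mul_one, smul_smul]
    rw [mul_comm ((ρ * X).trace) ((ρ * Y).trace)]
    abel
  -- notation
  set T : ℂ := (A ^ 2 * (X * Y - Y * X)).trace with hT
  set PX := Complex.I • (A * X₀ - X₀ * A) with hPX
  set PY := Complex.I • (A * Y₀ - Y₀ * A) with hPYdef
  set QX := A * X₀ + X₀ * A with hQX
  set QY := A * Y₀ + Y₀ * A with hQY
  -- key trace relations
  have htrPXQY : (PX * QY).trace = Complex.I * T := by
    rw [hPX, Matrix.smul_mul, Matrix.trace_smul, smul_eq_mul, trace_key, hcomm, hT]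
  have htrPYQX : (PY * QX).trace = -(Complex.I * T) := by
    rw [hPYdef, Matrix.smul_mul, Matrix.trace_smul, smul_eq_mul, trace_key]
    have h3 : Y₀ * X₀ - X₀ * Y₀ = -(X * Y - Y * X) := by rw [← hcomm]; abel
    rw [h3, mul_neg, Matrix.trace_neg, hT, mul_neg]
  have habsXY : ‖(PX * QY).trace‖ = ‖T‖ := by
    rw [htrPXQY]; simp
  have habsYX : ‖(PY * QX).trace‖ = ‖T‖ := by
    rw [htrPYQX]; simp
  -- identify K and L
  have halfre : ∀ z : ℂ, ((1/2 : ℂ) * z).re = z.re / 2 := by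
    intro z; simp [Complex.mul_re]; ring
  have hKX : K X = ((PX * PX).trace).re / 2 := by
    show (((1/2 : ℂ) * ((Complex.I • (A * X₀ - X₀ * A)) ^ 2).trace)).re = _
    rw [halfre, ← hPX, sq]
  have hKY : K Y = ((PY * PY).trace).re / 2 := by
    show (((1/2 : ℂ) * ((Complex.I • (A * Y₀ - Y₀ * A)) ^ 2).trace)).re = _
    rw [halfre, ← hPYdef, sq]
  have hLX : L X = ((QX * QX).trace).re / 2 := by
    show (((1/2 : ℂ) * ((A * X₀ + X₀ * A) ^ 2).trace)).re = _
    rw [halfre, ← hQX, sq]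
  have hLY : L Y = ((QY * QY).trace).re / 2 := by
    show (((1/2 : ℂ) * ((A * Y₀ + Y₀ * A) ^ 2).trace)).re = _
    rw [halfre, ← hQY, sq]
  have hPXh := hPherm X₀ hX0
  have hPYh := hPherm Y₀ hY0
  have hQXh := hQherm X₀ hX0
  have hQYh := hQherm Y₀ hY0
  rw [← hPX] at hPXh
  rw [← hPYdef] at hPYh
  rw [← hQX] at hQXh
  rw [← hQY] at hQYh
  -- nonnegativity
  have hKXnn : 0 ≤ K X := by
    rw [hKX]; linarith [herm_trace_sq_nonneg PX hPXh]
  have hKYnn : 0 ≤ K Y := by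
    rw [hKY]; linarith [herm_trace_sq_nonneg PY hPYh]
  have hLXnn : 0 ≤ L X := by
    rw [hLX]; linarith [herm_trace_sq_nonneg QX hQXh]
  have hLYnn : 0 ≤ L Y := by
    rw [hLY]; linarith [herm_trace_sq_nonneg QY hQYh]
  -- Cauchy–Schwarz
  have hcs1 := herm_cs PX QY hPXh hQYh
  rw [habsXY] at hcs1
  have hcs2 := herm_cs PY QX hPYh hQXh
  rw [habsYX] at hcs2
  have h1 : (1/4) * ‖T‖ ^ 2 ≤ K X * L Y := by
    rw [hKX, hLY]; nlinarith [hcs1]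
  have h2 : (1/4) * ‖T‖ ^ 2 ≤ K Y * L X := by
    rw [hKY, hLX]; nlinarith [hcs2]
  have habsnn : (0:ℝ) ≤ (1/4) * ‖T‖ ^ 2 := by positivity
  show W X * W Y ≥ (1/4) * ‖T‖ ^ 2
  have hWX : W X = Real.sqrt (K X * L X) := rfl
  have hWY : W Y = Real.sqrt (K Y * L Y) := rfl
  rw [hWX, hWY, ← Real.sqrt_mul (mul_nonneg hKXnn hLXnn)]
  calc (1/4) * ‖T‖ ^ 2
      = Real.sqrt (((1/4) * ‖T‖ ^ 2) * ((1/4) * ‖T‖ ^ 2)) :=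
        (Real.sqrt_mul_self habsnn).symm
    _ ≤ Real.sqrt ((K X * L Y) * (K Y * L X)) :=
        Real.sqrt_le_sqrt (mul_le_mul h1 h2 habsnn (mul_nonneg hKXnn hLYnn))
    _ = Real.sqrt (K X * L X * (K Y * L Y)) := by ring_nf
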